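/- arXiv:2011.06695 — 2 statements merged into one kernel-verified Lean document; each statement's English description precedes it below -/
import Mathlib

section
/- There exist finite probability distributions and functions π(x) > 0, v(x) > 0, τ(x) > 0, and c(x) ∈ {−1,1} such that the weighted average Σ_x c(x)·π(x)·v(x)·τ(x)·p(x) / Σ_x c(x)·π(x)·v(x)·p(x) is negative even though τ(x) > 0 for all x. (Negative IV weights under weak monotonicity can destroy causal interpretability.) -/
/-- there exist a finite probability distribution and functions
`π > 0`, `v > 0`, `τ > 0`, `c ∈ {-1, 1}` such that the weighted average
`Σ c·π·v·τ·p / Σ c·π·v·p` is negative even though every `τ(x)` is positive. -/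
theorem stmt3 : ∃ (n : ℕ) (p π v τ c : Fin n → ℝ),
    (∀ i, 0 < p i) ∧ (∑ i, p i = 1) ∧
    (∀ i, 0 < π i) ∧ (∀ i, 0 < v i) ∧ (∀ i, 0 < τ i) ∧
    (∀ i, c i = 1 ∨ c i = -1) ∧
    (∑ i, c i * π i * v i * τ i * p i) / (∑ i, c i * π i * v i * p i) < 0 := by
  refine ⟨2, ![1/2, 1/2], ![2, 1], ![1, 1], ![1, 3], ![1, -1], ?_, ?_, ?_, ?_, ?_, ?_, ?_⟩
  · intro i; fin_cases i <;> norm_num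
  · simp [Fin.sum_univ_two]; norm_num
  · intro i; fin_cases i <;> norm_num
  · intro i; fin_cases i <;> norm_num
  · intro i; fin_cases i <;> norm_num
  · intro i; fin_cases i <;> simp
  · simp [Fin.sum_univ_two]; norm_num
end

section
/- Suppose T is binary with E[T | X] = X·α linear in X, and let ξ be the coefficient on T in the L² linear projection of R on (T, X) (X including a constant). Then ξ = E[Var[T | X] · ξ(X)] / E[Var[T | X]], where ξ(X) = E[R | T=1, X] − E[R | T=0, X]. (Angrist 1998 regression weighting lemma.) -/
open Finset

section Defs

variable {Ω 𝓧 : Type*} [Fintype Ω]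

/-- Expectation of `f` under weights `p` on a finite outcome space. -/
noncomputable def pexp (p : Ω → ℝ) (f : Ω → ℝ) : ℝ := ∑ ω, p ω * f ω

open Classical in
/-- Probability of the event `A` under weights `p`. -/
noncomputable def pprob (p : Ω → ℝ) (A : Ω → Prop) : ℝ := ∑ ω, if A ω then p ω else 0

open Classical in
/-- Conditional expectation of `f` given the event `A`. -/
noncomputable def eexp (p : Ω → ℝ) (A : Ω → Prop) (f : Ω → ℝ) : ℝ :=
  (∑ ω, if A ω then p ω * f ω else 0) / pprob p A

/-- Conditional probability of `A` given `B`. -/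
noncomputable def cprob (p : Ω → ℝ) (A B : Ω → Prop) : ℝ :=
  pprob p (fun ω => A ω ∧ B ω) / pprob p B

/-- `p` is a probability vector. -/
def IsProb (p : Ω → ℝ) : Prop := (∀ ω, 0 ≤ p ω) ∧ ∑ ω, p ω = 1

/-- Conditional expectation of `f` given `X = x`. -/
noncomputable def condMean (p : Ω → ℝ) (X : Ω → 𝓧) (f : Ω → ℝ) (x : 𝓧) : ℝ :=
  eexp p (fun ω => X ω = x) f

/-- Conditional expectation of `f` given `X = x` and `Z = z`. -/
noncomputable def condMeanOn (p : Ω → ℝ) (X : Ω → 𝓧) (Z : Ω → ℝ) (f : Ω → ℝ) (x : 𝓧) (z : ℝ) : ℝ :=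
  eexp p (fun ω => X ω = x ∧ Z ω = z) f

/-- Conditional cslope coefficient `E[f | Z=1, X=x] - E[f | Z=0, X=x]`. -/
noncomputable def cslope (p : Ω → ℝ) (X : Ω → 𝓧) (Z : Ω → ℝ) (f : Ω → ℝ) (x : 𝓧) : ℝ :=
  condMeanOn p X Z f x 1 - condMeanOn p X Z f x 0

/-- Conditional variance of `f` given the event `A`. -/
noncomputable def evVar (p : Ω → ℝ) (A : Ω → Prop) (f : Ω → ℝ) : ℝ :=
  eexp p A (fun ω => (f ω - eexp p A f) ^ 2)

/-- Conditional variance of `f` given `X = x`. -/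
noncomputable def condVar (p : Ω → ℝ) (X : Ω → 𝓧) (f : Ω → ℝ) (x : 𝓧) : ℝ :=
  evVar p (fun ω => X ω = x) f

end Defs

lemma foc_aux {c d : ℝ} (h : ∀ t : ℝ, 0 ≤ c * t + d * t ^ 2) : c = 0 := by
  have hd : 0 ≤ d := by nlinarith [h 1, h (-1)]
  have hu : (0:ℝ) < 2*d+1 := by linarith
  have h1 := h (-c / (2*d+1))
  have key : c * (-c / (2*d+1)) + d * (-c / (2*d+1)) ^ 2 = (-(c^2)*(d+1))/((2*d+1)^2) := by
    field_simp; ring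
  rw [key, le_div_iff₀ (by positivity)] at h1
  nlinarith [sq_nonneg c]

lemma fiber_arith (P P₁ P₀ S₁ S₀ : ℝ) (hP : P = P₁ + P₀) (h1 : 0 ≤ P₁) (h0 : 0 ≤ P₀)
    (hS1 : P₁ = 0 → S₁ = 0) (hS0 : P₀ = 0 → S₀ = 0) :
    S₁ - P₁/P * (S₁ + S₀) = P * (P₁/P * (1 - P₁/P) * (S₁/P₁ - S₀/P₀)) := by
  by_cases hP1 : P₁ = 0
  · simp [hP1, hS1 hP1, hP]
  by_cases hP0 : P₀ = 0
  · rw [hP, hP0, hS0 hP0, add_zero, div_self hP1]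
    ring
  have hPne : P ≠ 0 := by
    subst hP
    have : 0 < P₁ + P₀ := by
      rcases h1.lt_or_eq with h|h
      · linarith [h0]
      · exact absurd h.symm hP1
    exact ne_of_gt this
  subst hP
  field_simp
  ring

open Classical in
lemma cov_lemma {Ω 𝓧 : Type*} [Fintype Ω] (p : Ω → ℝ) (hp : ∀ ω, 0 ≤ p ω)
    (X : Ω → 𝓧) (T : Ω → ℝ) (hT : ∀ ω, T ω = 0 ∨ T ω = 1) (f : Ω → ℝ) :
    pexp p (fun ω => f ω * (T ω - condMean p X T (X ω))) =
    pexp p (fun ω => condMean p X T (X ω) * (1 - condMean p X T (X ω)) *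
      (condMeanOn p X T f (X ω) 1 - condMeanOn p X T f (X ω) 0)) := by
  classical
  unfold pexp
  rw [← Finset.sum_fiberwise_of_maps_to (t := Finset.univ.image X) (g := X)
        (fun ω _ => Finset.mem_image_of_mem X (Finset.mem_univ ω)),
      ← Finset.sum_fiberwise_of_maps_to (t := Finset.univ.image X) (g := X)
        (fun ω _ => Finset.mem_image_of_mem X (Finset.mem_univ ω))]
  apply Finset.sum_congr rfl
  intro x _
  have hfib : ∀ ω ∈ Finset.univ.filter (fun ω => X ω = x), X ω = x :=
    fun ω hω => (Finset.mem_filter.mp hω).2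
  -- rewrite both sides using X ω = x
  rw [Finset.sum_congr rfl (fun ω hω => by rw [hfib ω hω] :
        ∀ ω ∈ Finset.univ.filter (fun ω => X ω = x),
          p ω * (f ω * (T ω - condMean p X T (X ω)))
          = p ω * (f ω * (T ω - condMean p X T x))),
      Finset.sum_congr rfl (fun ω hω => by rw [hfib ω hω] :
        ∀ ω ∈ Finset.univ.filter (fun ω => X ω = x),
          p ω * (condMean p X T (X ω) * (1 - condMean p X T (X ω)) *
            (condMeanOn p X T f (X ω) 1 - condMeanOn p X T f (X ω) 0))
          = p ω * (condMean p X T x * (1 - condMean p X T x) *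
            (condMeanOn p X T f x 1 - condMeanOn p X T f x 0)))]
  rw [← Finset.sum_mul]
  set P₁ : ℝ := ∑ ω, if X ω = x ∧ T ω = 1 then p ω else 0 with hP₁def
  set P₀ : ℝ := ∑ ω, if X ω = x ∧ T ω = 0 then p ω else 0 with hP₀def
  set S₁ : ℝ := ∑ ω, if X ω = x ∧ T ω = 1 then p ω * f ω else 0 with hS₁def
  set S₀ : ℝ := ∑ ω, if X ω = x ∧ T ω = 0 then p ω * f ω else 0 with hS₀def
  have hP : pprob p (fun ω => X ω = x) = P₁ + P₀ := by
    rw [pprob, hP₁def, hP₀def, ← Finset.sum_add_distrib]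
    refine Finset.sum_congr rfl fun ω _ => ?_
    rcases hT ω with h|h <;> by_cases hx : X ω = x <;> simp [hx, h]
  have hm : condMean p X T x = P₁ / (P₁ + P₀) := by
    rw [condMean, eexp, hP]
    congr 1
    refine Finset.sum_congr rfl fun ω _ => ?_
    rcases hT ω with h|h <;> by_cases hx : X ω = x <;> simp [hx, h]
  have hc1 : condMeanOn p X T f x 1 = S₁ / P₁ := by
    rw [condMeanOn, eexp, pprob]
    congr 1 <;> exact Finset.sum_congr rfl fun ω _ => by
      by_cases h : X ω = x ∧ T ω = 1 <;> simp [h]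
  have hc0 : condMeanOn p X T f x 0 = S₀ / P₀ := by
    rw [condMeanOn, eexp, pprob]
    congr 1 <;> exact Finset.sum_congr rfl fun ω _ => by
      by_cases h : X ω = x ∧ T ω = 0 <;> simp [h]
  have hfT : ∑ ω ∈ Finset.univ.filter (fun ω => X ω = x), p ω * (f ω * (T ω - condMean p X T x))
      = S₁ - P₁/(P₁+P₀) * (S₁ + S₀) := by
    have e1 : ∑ ω ∈ Finset.univ.filter (fun ω => X ω = x), p ω * (f ω * (T ω - condMean p X T x))
        = (∑ ω, if X ω = x then p ω * f ω * T ω else 0)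
          - condMean p X T x * (∑ ω, if X ω = x then p ω * f ω else 0) := by
      rw [Finset.mul_sum, ← Finset.sum_sub_distrib, Finset.sum_filter]
      refine Finset.sum_congr rfl fun ω _ => ?_
      by_cases hx : X ω = x <;> simp [hx] <;> ring
    rw [e1, hm]
    congr 1
    · refine Finset.sum_congr rfl fun ω _ => ?_
      rcases hT ω with h|h <;> by_cases hx : X ω = x <;> simp [hx, h]
    · congr 1
      rw [hS₁def, hS₀def, ← Finset.sum_add_distrib]
      refine Finset.sum_congr rfl fun ω _ => ?_
      rcases hT ω with h|h <;> by_cases hx : X ω = x <;> simp [hx, h]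
  have hPsum : ∑ ω ∈ Finset.univ.filter (fun ω => X ω = x), p ω = P₁ + P₀ := by
    rw [← hP, pprob, Finset.sum_filter]
  have h1 : 0 ≤ P₁ := Finset.sum_nonneg fun ω _ => by split_ifs; exacts [hp ω, le_rfl]
  have h0 : 0 ≤ P₀ := Finset.sum_nonneg fun ω _ => by split_ifs; exacts [hp ω, le_rfl]
  have hS1 : P₁ = 0 → S₁ = 0 := by
    intro h
    refine Finset.sum_eq_zero fun ω _ => ?_
    have := (Finset.sum_eq_zero_iff_of_nonneg (fun ω _ => by split_ifs; exacts [hp ω, le_rfl])).mp h ω (Finset.mem_univ ω)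
    split_ifs at this ⊢ with hc
    · rw [this, zero_mul]
    · rfl
  have hS0 : P₀ = 0 → S₀ = 0 := by
    intro h
    refine Finset.sum_eq_zero fun ω _ => ?_
    have := (Finset.sum_eq_zero_iff_of_nonneg (fun ω _ => by split_ifs; exacts [hp ω, le_rfl])).mp h ω (Finset.mem_univ ω)
    split_ifs at this ⊢ with hc
    · rw [this, zero_mul]
    · rfl
  rw [hfT, hPsum, hm, hc1, hc0]
  exact fiber_arith _ _ _ _ _ rfl h1 h0 hS1 hS0

section Helpers
variable {Ω 𝓧 : Type*} [Fintype Ω] {p : Ω → ℝ} {X : Ω → 𝓧} {T : Ω → ℝ}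

lemma pprob_nonneg (hp : ∀ ω, 0 ≤ p ω) (A : Ω → Prop) : 0 ≤ pprob p A :=
  Finset.sum_nonneg fun ω _ => by split_ifs; exacts [hp ω, le_rfl]

lemma pprob_pos {A : Ω → Prop} (hp : ∀ ω, 0 ≤ p ω) {ω : Ω} (hA : A ω) (hω : 0 < p ω) :
    0 < pprob p A := by
  classical
  have hle : p ω ≤ pprob p A := by
    rw [pprob]
    have := Finset.single_le_sum (f := fun ω' => if A ω' then p ω' else 0)
      (fun ω' _ => by by_cases h : A ω' <;> simp [h, hp ω']) (Finset.mem_univ ω)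
    simpa [hA] using this
  linarith

lemma pprob_split (hT : ∀ ω, T ω = 0 ∨ T ω = 1) (x : 𝓧) :
    pprob p (fun ω => X ω = x) =
      pprob p (fun ω => X ω = x ∧ T ω = 1) + pprob p (fun ω => X ω = x ∧ T ω = 0) := by
  classical
  simp only [pprob, ← Finset.sum_add_distrib]
  refine Finset.sum_congr rfl fun ω _ => ?_
  rcases hT ω with h|h <;> by_cases hx : X ω = x <;> simp [hx, h]

lemma condMean_eq (hT : ∀ ω, T ω = 0 ∨ T ω = 1) (x : 𝓧) :
    condMean p X T x = pprob p (fun ω => X ω = x ∧ T ω = 1) / pprob p (fun ω => X ω = x) := by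
  classical
  rw [condMean, eexp, pprob]
  congr 1
  refine Finset.sum_congr rfl fun ω _ => ?_
  rcases hT ω with h|h <;> by_cases hx : X ω = x <;> simp [hx, h]

lemma cMO_T_one (x : 𝓧) (h1 : pprob p (fun ω => X ω = x ∧ T ω = 1) ≠ 0) :
    condMeanOn p X T T x 1 = 1 := by
  rw [condMeanOn, eexp, div_eq_one_iff_eq h1, pprob]
  refine Finset.sum_congr rfl fun ω _ => ?_
  by_cases h : X ω = x ∧ T ω = 1
  · rw [if_pos h, if_pos h, h.2, mul_one]
  · rw [if_neg h, if_neg h]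

lemma cMO_T_zero (x : 𝓧) : condMeanOn p X T T x 0 = 0 := by
  rw [condMeanOn, eexp]
  refine div_eq_zero_iff.mpr (Or.inl (Finset.sum_eq_zero fun ω _ => ?_))
  by_cases h : X ω = x ∧ T ω = 0
  · rw [if_pos h, h.2, mul_zero]
  · rw [if_neg h]

lemma cMO_const (f : Ω → ℝ) (c : ℝ) (x : 𝓧) (z : ℝ)
    (hf : ∀ ω, X ω = x → f ω = c)
    (h1 : pprob p (fun ω => X ω = x ∧ T ω = z) ≠ 0) :
    condMeanOn p X T f x z = c := by
  rw [condMeanOn, eexp, div_eq_iff h1, pprob, Finset.mul_sum]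
  refine Finset.sum_congr rfl fun ω _ => ?_
  by_cases h : X ω = x ∧ T ω = z
  · rw [if_pos h, if_pos h, hf ω h.1, mul_comm]
  · rw [if_neg h, if_neg h, mul_zero]

end Helpers

lemma pexp_congr {Ω : Type*} [Fintype Ω] (p : Ω → ℝ) {f g : Ω → ℝ} (h : ∀ ω, f ω = g ω) :
    pexp p f = pexp p g := by
  unfold pexp; exact Finset.sum_congr rfl fun ω _ => by rw [h ω]

lemma foc_general {Ω : Type*} [Fintype Ω] (p : Ω → ℝ) (q u : Ω → ℝ)
    (h : ∀ t : ℝ, pexp p (fun ω => (q ω)^2) ≤ pexp p (fun ω => (q ω - t * u ω)^2)) :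
    pexp p (fun ω => q ω * u ω) = 0 := by
  have expand : ∀ t : ℝ, pexp p (fun ω => (q ω - t * u ω)^2) =
      pexp p (fun ω => (q ω)^2) +
        (pexp p (fun ω => -2*(q ω * u ω)) * t + pexp p (fun ω => (u ω)^2) * t^2) := by
    intro t
    simp only [pexp, Finset.sum_mul, ← Finset.sum_add_distrib]
    exact Finset.sum_congr rfl fun ω _ => by ring
  have h0 := foc_aux (c := pexp p (fun ω => -2*(q ω * u ω))) (d := pexp p (fun ω => (u ω)^2))
    (fun t => by have := h t; rw [expand t] at this; linarith)
  have e2 : pexp p (fun ω => -2*(q ω * u ω)) = -2 * pexp p (fun ω => q ω * u ω) := by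
    simp only [pexp, Finset.mul_sum]
    exact Finset.sum_congr rfl fun ω _ => by ring
  rw [e2] at h0
  linarith

set_option maxHeartbeats 1000000 in
/-- Angrist 1998: if binary `T` has `E[T | X] = X·α` linear in `X`,
then the coefficient `b` on `T` in the L² linear projection of `R` on `(T, X)`
equals `E[Var[T|X] · ξ(X)] / E[Var[T|X]]`, where
`ξ(x) = E[R | T=1, X=x] - E[R | T=0, X=x]` and `Var[T|X] = E[T|X](1-E[T|X])`. -/
theorem stmt4 {Ω : Type*} [Fintype Ω] {k : ℕ} (p : Ω → ℝ) (hp : IsProb p)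
    (X : Ω → Fin k → ℝ) (T R : Ω → ℝ) (hT : ∀ ω, T ω = 0 ∨ T ω = 1)
    (α : Fin k → ℝ)
    (hlin : ∀ x : Fin k → ℝ, 0 < pprob p (fun ω => X ω = x) →
      condMean p X T x = ∑ j, x j * α j)
    (hden : 0 < pexp p (fun ω => condMean p X T (X ω) * (1 - condMean p X T (X ω))))
    (b : ℝ) (g : Fin k → ℝ)
    (hmin : ∀ (b' : ℝ) (g' : Fin k → ℝ),
      pexp p (fun ω => (R ω - T ω * b - ∑ j, X ω j * g j) ^ 2) ≤
        pexp p (fun ω => (R ω - T ω * b' - ∑ j, X ω j * g' j) ^ 2)) :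
    b = pexp p (fun ω => condMean p X T (X ω) * (1 - condMean p X T (X ω)) *
            (condMeanOn p X T R (X ω) 1 - condMeanOn p X T R (X ω) 0)) /
        pexp p (fun ω => condMean p X T (X ω) * (1 - condMean p X T (X ω))) := by
  have hp0 := hp.1
  have hfoc1 : pexp p (fun ω => (R ω - T ω * b - ∑ j, X ω j * g j) * T ω) = 0 := by
    refine foc_general p (fun ω => R ω - T ω * b - ∑ j, X ω j * g j) T fun t => ?_
    exact (hmin (b + t) g).trans_eq (pexp_congr p fun ω => by ring)
  have hfoc2 : pexp p (fun ω => (R ω - T ω * b - ∑ j, X ω j * g j) *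
      (∑ j, X ω j * α j)) = 0 := by
    refine foc_general p (fun ω => R ω - T ω * b - ∑ j, X ω j * g j)
      (fun ω => ∑ j, X ω j * α j) fun t => ?_
    refine (hmin b (fun j => g j + t * α j)).trans_eq (pexp_congr p fun ω => ?_)
    have e : ∑ j, X ω j * (g j + t * α j)
        = (∑ j, X ω j * g j) + t * ∑ j, X ω j * α j := by
      rw [Finset.mul_sum, ← Finset.sum_add_distrib]
      exact Finset.sum_congr rfl fun j _ => by ring
    rw [e]; ring
  have hfoc2' : pexp p (fun ω => (R ω - T ω * b - ∑ j, X ω j * g j) *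
      condMean p X T (X ω)) = 0 := by
    rw [← hfoc2]
    unfold pexp
    refine Finset.sum_congr rfl fun ω _ => ?_
    dsimp only
    by_cases hω : p ω = 0
    · rw [hω, zero_mul, zero_mul]
    · rw [hlin (X ω) (pprob_pos hp0 rfl ((hp0 ω).lt_of_ne (Ne.symm hω)))]
  have hfoc : pexp p (fun ω => (R ω - T ω * b - ∑ j, X ω j * g j) *
      (T ω - condMean p X T (X ω))) = 0 := by
    have expand : pexp p (fun ω => (R ω - T ω * b - ∑ j, X ω j * g j) *
        (T ω - condMean p X T (X ω)))
        = pexp p (fun ω => (R ω - T ω * b - ∑ j, X ω j * g j) * T ω)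
          - pexp p (fun ω => (R ω - T ω * b - ∑ j, X ω j * g j) * condMean p X T (X ω)) := by
      unfold pexp
      rw [← Finset.sum_sub_distrib]
      exact Finset.sum_congr rfl fun ω _ => by ring
    rw [expand, hfoc1, hfoc2', sub_zero]
  have hsplit : pexp p (fun ω => (R ω - T ω * b - ∑ j, X ω j * g j) *
      (T ω - condMean p X T (X ω)))
      = pexp p (fun ω => R ω * (T ω - condMean p X T (X ω)))
        - b * pexp p (fun ω => T ω * (T ω - condMean p X T (X ω)))
        - pexp p (fun ω => (∑ j, X ω j * g j) * (T ω - condMean p X T (X ω))) := by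
    unfold pexp
    rw [Finset.mul_sum, ← Finset.sum_sub_distrib, ← Finset.sum_sub_distrib]
    exact Finset.sum_congr rfl fun ω _ => by ring
  have hcovR := cov_lemma p hp0 X T hT R
  have hcovT := cov_lemma p hp0 X T hT T
  have hcovG := cov_lemma p hp0 X T hT (fun ω => ∑ j, X ω j * g j)
  have hposs : ∀ ω : Ω, p ω ≠ 0 →
      condMean p X T (X ω) * (1 - condMean p X T (X ω)) ≠ 0 →
      pprob p (fun ω' => X ω' = X ω ∧ T ω' = 1) ≠ 0 ∧
        pprob p (fun ω' => X ω' = X ω ∧ T ω' = 0) ≠ 0 := by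
    intro ω hω hv
    obtain ⟨hm0, hm1⟩ := mul_ne_zero_iff.mp hv
    have hPpos : 0 < pprob p (fun ω' => X ω' = X ω) :=
      pprob_pos hp0 rfl ((hp0 ω).lt_of_ne (Ne.symm hω))
    have hmeq := condMean_eq (p := p) (X := X) hT (X ω)
    have hP1 : pprob p (fun ω' => X ω' = X ω ∧ T ω' = 1) ≠ 0 :=
      fun h => hm0 (by rw [hmeq, h, zero_div])
    refine ⟨hP1, fun h => hm1 ?_⟩
    have hsplitP := pprob_split (p := p) (X := X) hT (X ω)
    rw [h, add_zero] at hsplitP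
    rw [hmeq, ← hsplitP, div_self (ne_of_gt hPpos), sub_self]
  have hTv : pexp p (fun ω => condMean p X T (X ω) * (1 - condMean p X T (X ω)) *
      (condMeanOn p X T T (X ω) 1 - condMeanOn p X T T (X ω) 0))
      = pexp p (fun ω => condMean p X T (X ω) * (1 - condMean p X T (X ω))) := by
    unfold pexp
    refine Finset.sum_congr rfl fun ω _ => ?_
    dsimp only
    by_cases hω : p ω = 0
    · rw [hω, zero_mul, zero_mul]
    by_cases hv : condMean p X T (X ω) * (1 - condMean p X T (X ω)) = 0
    · rw [hv]; ring
    obtain ⟨h1, h0⟩ := hposs ω hω hv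
    rw [cMO_T_one (X ω) h1, cMO_T_zero (X ω)]
    ring
  have hGv : pexp p (fun ω => condMean p X T (X ω) * (1 - condMean p X T (X ω)) *
      (condMeanOn p X T (fun ω' => ∑ j, X ω' j * g j) (X ω) 1
        - condMeanOn p X T (fun ω' => ∑ j, X ω' j * g j) (X ω) 0)) = 0 := by
    unfold pexp
    refine Finset.sum_eq_zero fun ω _ => ?_
    dsimp only
    by_cases hω : p ω = 0
    · rw [hω, zero_mul]
    by_cases hv : condMean p X T (X ω) * (1 - condMean p X T (X ω)) = 0
    · rw [hv, zero_mul, mul_zero]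
    obtain ⟨h1, h0⟩ := hposs ω hω hv
    rw [cMO_const (fun ω' => ∑ j, X ω' j * g j) (∑ j, X ω j * g j) (X ω) 1
          (fun ω' hx => by rw [hx]) h1,
        cMO_const (fun ω' => ∑ j, X ω' j * g j) (∑ j, X ω j * g j) (X ω) 0
          (fun ω' hx => by rw [hx]) h0,
        sub_self, mul_zero, mul_zero]
  rw [hsplit, hcovR, hcovT, hcovG, hTv, hGv, sub_zero] at hfoc
  rw [eq_div_iff (ne_of_gt hden)]
  linarith
end
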